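/- If M is a (1+α)-diagonally dominant symmetric matrix with nonpositive off-diagonal entries arising as a principal submatrix of a Laplacian, and L_M is its completion to a Laplacian by adding one vertex x, then the second smallest eigenvalue of the normalized Schur complement of L_M onto the original vertices is at least α/(1+α). -/

import Mathlib

open Matrix BigOperators

/-- The second smallest eigenvalue of a symmetric matrix, via the
Courant–Fischer min-max characterization. -/
noncomputable def lambda2 {ι : Type*} [Fintype ι] (M : Matrix ι ι ℝ) : ℝ :=
  ⨅ U : {U : Submodule ℝ (ι → ℝ) // Module.finrank ℝ U = 2},
    ⨆ x : {x : ι → ℝ // x ∈ U.1 ∧ x ≠ 0},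
      (x.1 ⬝ᵥ M.mulVec x.1) / (x.1 ⬝ᵥ x.1)

/-- if `M` is a `(1+α)`-diagonally dominant symmetric matrix with
nonpositive off-diagonal entries (a principal submatrix of a Laplacian, positive
diagonal), and `L_M` is its completion to a Laplacian by a single new vertex `x`
(with row sums zero), then the Schur complement `S = M - (1/c) b bᵀ` of `L_M`
eliminating `x` (where `b_u = ∑_v M_{uv}` and `c = ∑_u b_u`), normalized by its
own diagonal degrees, has second smallest eigenvalue at least `α/(1+α)`. -/
theorem dd_schur_complement_expansion (n : ℕ) (hn : 2 ≤ n) (α : ℝ) (hα : 0 < α)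
    (M : Matrix (Fin n) (Fin n) ℝ) (hsym : M.IsSymm)
    (hoff : ∀ u v, u ≠ v → M u v ≤ 0)
    (hdiagpos : ∀ u, 0 < M u u)
    (hdd : ∀ u, (1 + α) * ∑ v ∈ Finset.univ.erase u, |M u v| ≤ M u u)
    (b : Fin n → ℝ) (hb : b = fun u => ∑ v, M u v)
    (c : ℝ) (hc : c = ∑ u, b u)
    (S : Matrix (Fin n) (Fin n) ℝ)
    (hS : S = M - c⁻¹ • Matrix.vecMulVec b b) :
    lambda2 (Matrix.diagonal (fun u => (Real.sqrt (S u u))⁻¹) * S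
        * Matrix.diagonal (fun u => (Real.sqrt (S u u))⁻¹))
      ≥ α / (1 + α) := by
  have h1α : (0:ℝ) < 1 + α := by linarith
  set κ : ℝ := α / (1 + α) with hκ
  have hκpos : 0 < κ := div_pos hα h1α
  have hMsym : ∀ u v, M v u = M u v := fun u v => hsym.apply u v
  have habs : ∀ u, ∑ v ∈ Finset.univ.erase u, |M u v|
      = - ∑ v ∈ Finset.univ.erase u, M u v := by
    intro u
    rw [← Finset.sum_neg_distrib]
    exact Finset.sum_congr rfl fun v hv =>
      abs_of_nonpos (hoff u v (Ne.symm (Finset.mem_erase.mp hv).1))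
  have habsnn : ∀ u, 0 ≤ ∑ v ∈ Finset.univ.erase u, |M u v| :=
    fun u => Finset.sum_nonneg fun v _ => abs_nonneg _
  have hbsplit : ∀ u, b u = M u u - ∑ v ∈ Finset.univ.erase u, |M u v| := by
    intro u
    rw [hb, habs]
    have := Finset.add_sum_erase Finset.univ (fun v => M u v) (Finset.mem_univ u)
    simp only at this ⊢
    linarith [this]
  have hbM : ∀ u, b u ≤ M u u := fun u => by rw [hbsplit]; linarith [habsnn u]
  have hbk : ∀ u, κ * M u u ≤ b u := by
    intro u
    rw [hbsplit, hκ]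
    have h := hdd u
    have hA := habsnn u
    rw [div_mul_eq_mul_div, div_le_iff₀ h1α]
    nlinarith
  have hbpos : ∀ u, 0 < b u :=
    fun u => lt_of_lt_of_le (mul_pos hκpos (hdiagpos u)) (hbk u)
  have hcpos : 0 < c := by
    rw [hc]
    exact Finset.sum_pos (fun u _ => hbpos u) ⟨⟨0, by omega⟩, Finset.mem_univ _⟩
  have hblt : ∀ u, b u < c := by
    intro u
    have hcard : 0 < (Finset.univ.erase u).card := by
      rw [Finset.card_erase_of_mem (Finset.mem_univ u), Finset.card_univ, Fintype.card_fin]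
      omega
    obtain ⟨v, hv⟩ := Finset.card_pos.mp hcard
    have h1 : b v ≤ ∑ w ∈ Finset.univ.erase u, b w :=
      Finset.single_le_sum (fun i _ => (hbpos i).le) hv
    have h2 : b u + ∑ w ∈ Finset.univ.erase u, b w = ∑ w, b w :=
      Finset.add_sum_erase Finset.univ b (Finset.mem_univ u)
    rw [hc]
    linarith [hbpos v]
  set d : Fin n → ℝ := fun u => S u u with hd
  have hdval : ∀ u, d u = M u u - c⁻¹ * (b u * b u) := by
    intro u
    simp [hd, hS, Matrix.sub_apply, Matrix.vecMulVec_apply]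
  have hdpos : ∀ u, 0 < d u := by
    intro u
    rw [hdval]
    have h1 : c⁻¹ * (b u * b u) < b u := by
      rw [inv_mul_lt_iff₀ hcpos]
      exact mul_lt_mul_of_pos_right (hblt u) (hbpos u)
    linarith [hbM u]
  have hdleM : ∀ u, d u ≤ M u u := by
    intro u
    rw [hdval]
    have : 0 ≤ c⁻¹ * (b u * b u) := mul_nonneg (inv_nonneg.mpr hcpos.le) (mul_self_nonneg _)
    linarith
  -- core inequality A : yᵀ M y ≥ ∑ b y²
  have hA : ∀ y : Fin n → ℝ, ∑ u, b u * (y u)^2 ≤ ∑ u, ∑ v, M u v * y u * y v := by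
    intro y
    set g : Fin n → ℝ := fun u => ∑ v ∈ Finset.univ.erase u, M u v * y u * y v with hg
    set h1 : Fin n → ℝ := fun u => ∑ v ∈ Finset.univ.erase u, |M u v| * (y u)^2 with hh1
    set h2 : Fin n → ℝ := fun u => ∑ v ∈ Finset.univ.erase u, |M u v| * (y v)^2 with hh2
    have hswap : ∑ u, h2 u = ∑ u, h1 u := by
      simp only [hh1, hh2]
      rw [Finset.sum_comm' (s := Finset.univ) (t := fun u => Finset.univ.erase u)
        (t' := Finset.univ) (s' := fun v => Finset.univ.erase v)
        (by intro x y; simp [Finset.mem_erase]; tauto)]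
      exact Finset.sum_congr rfl fun v _ => Finset.sum_congr rfl fun u _ => by
        rw [hMsym]
    have hgh : ∀ u, 0 ≤ g u + (h1 u + h2 u)/2 := by
      intro u
      have e : g u + (h1 u + h2 u)/2 = ∑ v ∈ Finset.univ.erase u,
          (M u v * y u * y v + (|M u v| * (y u)^2 + |M u v| * (y v)^2)/2) := by
        simp only [hg, hh1, hh2]
        rw [← Finset.sum_add_distrib, Finset.sum_div, ← Finset.sum_add_distrib]
      rw [e]
      refine Finset.sum_nonneg fun v hv => ?_
      have hne : u ≠ v := Ne.symm (Finset.mem_erase.mp hv).1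
      have h0 := hoff u v hne
      rw [abs_of_nonpos h0]
      nlinarith [sq_nonneg (y u - y v)]
    have hsum : 0 ≤ ∑ u, g u + ∑ u, h1 u := by
      have e : ∑ u, (g u + (h1 u + h2 u)/2)
          = ∑ u, g u + (∑ u, h1 u + ∑ u, h2 u)/2 := by
        rw [Finset.sum_add_distrib, ← Finset.sum_div, Finset.sum_add_distrib]
      have := Finset.sum_nonneg (s := Finset.univ) (fun u _ => hgh u)
      rw [e, hswap] at this
      linarith
    have eT : ∑ u, ∑ v, M u v * y u * y v
        = ∑ u, (M u u * (y u)^2 + g u) := by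
      refine Finset.sum_congr rfl fun u _ => ?_
      rw [← Finset.add_sum_erase Finset.univ (fun v => M u v * y u * y v) (Finset.mem_univ u)]
      simp only [hg]
      congr 1
      ring
    have eB : ∑ u, b u * (y u)^2
        = ∑ u, (M u u * (y u)^2 - h1 u) := by
      refine Finset.sum_congr rfl fun u _ => ?_
      rw [hbsplit u, sub_mul, Finset.sum_mul]
    rw [eT, eB, Finset.sum_add_distrib, Finset.sum_sub_distrib]
    linarith
  -- A2 : κ d ≤ b pointwise
  have hA2 : ∀ y : Fin n → ℝ, κ * ∑ u, d u * (y u)^2 ≤ ∑ u, b u * (y u)^2 := by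
    intro y
    rw [Finset.mul_sum]
    refine Finset.sum_le_sum fun u _ => ?_
    have h1 : κ * d u ≤ b u := by
      have := mul_le_mul_of_nonneg_left (hdleM u) hκpos.le
      linarith [hbk u]
    have h2 : 0 ≤ (y u)^2 := sq_nonneg _
    calc κ * (d u * (y u)^2) = (κ * d u) * (y u)^2 := by ring
      _ ≤ b u * (y u)^2 := mul_le_mul_of_nonneg_right h1 h2
  -- row/column sums
  have hrow : ∀ u, ∑ v, M u v = b u := fun u => by rw [hb]
  have hcol : ∀ v, ∑ u, M u v = b v := by
    intro v
    rw [hb]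
    exact Finset.sum_congr rfl fun u _ => hMsym v u ▸ rfl
  -- key quadratic inequality for S
  have hQ : ∀ y : Fin n → ℝ, (∑ u, d u * y u = 0) →
      κ * ∑ u, d u * (y u)^2 ≤ ∑ u, ∑ v, S u v * y u * y v := by
    intro y hy
    set β : ℝ := ∑ u, b u * y u with hβ
    set t : ℝ := β / c with ht
    set z : Fin n → ℝ := fun u => y u - t with hz
    have e1 : ∑ u, ∑ v, S u v * y u * y v
        = (∑ u, ∑ v, M u v * y u * y v) - c⁻¹ * β * β := by
      rw [hS]
      have : ∀ u v, (M - c⁻¹ • Matrix.vecMulVec b b) u v * y u * y v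
          = M u v * y u * y v - c⁻¹ * ((b u * y u) * (b v * y v)) := by
        intro u v
        simp [Matrix.sub_apply, Matrix.vecMulVec_apply]
        ring
      simp_rw [this, Finset.sum_sub_distrib]
      congr 1
      have inner : ∀ u, ∑ v, c⁻¹ * ((b u * y u) * (b v * y v)) = c⁻¹ * (b u * y u) * β := by
        intro u
        rw [hβ, Finset.mul_sum]
        exact Finset.sum_congr rfl fun v _ => by ring
      simp_rw [inner]
      rw [hβ, ← Finset.sum_mul, ← Finset.mul_sum]
    have e2 : ∑ u, ∑ v, M u v * z u * z v
        = (∑ u, ∑ v, M u v * y u * y v) - 2*t*β + t^2 * c := by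
      have expand : ∀ u v, M u v * z u * z v
          = M u v * y u * y v - t * (M u v * y u) - t * (M u v * y v) + t^2 * M u v := by
        intro u v; simp only [hz]; ring
      simp_rw [expand, Finset.sum_add_distrib, Finset.sum_sub_distrib]
      have p1 : ∑ u, ∑ v, t * (M u v * y u) = t * β := by
        simp_rw [show ∀ u v, t * (M u v * y u) = t * y u * M u v from fun u v => by ring,
          ← Finset.mul_sum, hrow]
        rw [hβ, Finset.mul_sum]
        exact Finset.sum_congr rfl fun u _ => by ring
      have p2 : ∑ u, ∑ v, t * (M u v * y v) = t * β := by
        rw [Finset.sum_comm' (s := Finset.univ) (t := fun _ => Finset.univ)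
          (t' := Finset.univ) (s' := fun _ => Finset.univ) (by simp)]
        simp_rw [show ∀ v u, t * (M u v * y v) = t * y v * M u v from fun v u => by ring,
          ← Finset.mul_sum, hcol]
        rw [hβ, Finset.mul_sum]
        exact Finset.sum_congr rfl fun u _ => by ring
      have p3 : ∑ u, ∑ v, t^2 * M u v = t^2 * c := by
        have inner : ∀ u, ∑ v, t^2 * M u v = t^2 * b u := by
          intro u; rw [← hrow u, Finset.mul_sum]
        simp_rw [inner]
        rw [hc, Finset.mul_sum]
      rw [p1, p2, p3]
      ring
    have e3 : c⁻¹ * β * β = 2*t*β - t^2 * c := by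
      rw [ht]
      field_simp
      ring
    have eSz : ∑ u, ∑ v, S u v * y u * y v = ∑ u, ∑ v, M u v * z u * z v := by
      rw [e1, e2, e3]; ring
    have edz : ∑ u, d u * (z u)^2
        = ∑ u, d u * (y u)^2 - 2*t*(∑ u, d u * y u) + t^2 * ∑ u, d u := by
      simp_rw [show ∀ u, d u * (z u)^2
          = d u * (y u)^2 - 2*t*(d u * y u) + t^2 * d u from fun u => by simp only [hz]; ring,
        Finset.sum_add_distrib, Finset.sum_sub_distrib, ← Finset.mul_sum]
    have hdz : ∑ u, d u * (y u)^2 ≤ ∑ u, d u * (z u)^2 := by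
      rw [edz, hy]
      have : 0 ≤ t^2 * ∑ u, d u := by
        have : 0 ≤ ∑ u, d u := Finset.sum_nonneg fun u _ => (hdpos u).le
        positivity
      linarith
    calc κ * ∑ u, d u * (y u)^2 ≤ κ * ∑ u, d u * (z u)^2 :=
          mul_le_mul_of_nonneg_left hdz hκpos.le
      _ ≤ ∑ u, b u * (z u)^2 := hA2 z
      _ ≤ ∑ u, ∑ v, M u v * z u * z v := hA z
      _ = ∑ u, ∑ v, S u v * y u * y v := eSz.symm
  -- normalized matrix
  set f : Fin n → ℝ := fun u => (Real.sqrt (S u u))⁻¹ with hf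
  set N : Matrix (Fin n) (Fin n) ℝ := Matrix.diagonal f * S * Matrix.diagonal f with hN
  have hNapp : ∀ u v, N u v = f u * S u v * f v := by
    intro u v
    rw [hN, Matrix.mul_diagonal, Matrix.diagonal_mul]
  have hquad : ∀ (A : Matrix (Fin n) (Fin n) ℝ) (x : Fin n → ℝ),
      x ⬝ᵥ A.mulVec x = ∑ u, ∑ v, A u v * x u * x v := by
    intro A x
    simp only [dotProduct, Matrix.mulVec, dotProduct, Finset.mul_sum]
    exact Finset.sum_congr rfl fun u _ => Finset.sum_congr rfl fun v _ => by ring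
  have hsqrt : ∀ u, Real.sqrt (d u) * Real.sqrt (d u) = d u :=
    fun u => Real.mul_self_sqrt (hdpos u).le
  have hsqrtpos : ∀ u, 0 < Real.sqrt (d u) := fun u => Real.sqrt_pos.mpr (hdpos u)
  have hfd : ∀ u, d u * f u = Real.sqrt (d u) := by
    intro u
    rw [hf]
    show d u * (Real.sqrt (S u u))⁻¹ = _
    rw [show S u u = d u from rfl, ← hsqrt u]
    field_simp
    rw [Real.sqrt_sq (hsqrtpos u).le, pow_two, mul_div_assoc, div_self (hsqrtpos u).ne', mul_one]
  have hfd2 : ∀ u (r : ℝ), d u * (f u * r)^2 = r^2 := by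
    intro u r
    rw [hf]
    show d u * ((Real.sqrt (S u u))⁻¹ * r)^2 = r^2
    rw [show S u u = d u from rfl]
    rw [mul_pow, ← mul_assoc, inv_pow, pow_two, hsqrt u]
    rw [mul_inv_cancel₀ (hdpos u).ne']
    ring
  -- Rayleigh bound for vectors orthogonal to sqrt d
  have hRay : ∀ x : Fin n → ℝ, (∑ u, Real.sqrt (d u) * x u = 0) → x ≠ 0 →
      κ ≤ (x ⬝ᵥ N.mulVec x) / (x ⬝ᵥ x) := by
    intro x hxw hx0
    have hxx : 0 < x ⬝ᵥ x := by
      obtain ⟨u, hu⟩ := Function.ne_iff.mp hx0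
      exact Finset.sum_pos' (fun i _ => mul_self_nonneg _)
        ⟨u, Finset.mem_univ u, mul_self_pos.mpr hu⟩
    set y : Fin n → ℝ := fun u => f u * x u with hy
    have hy0 : ∑ u, d u * y u = 0 := by
      simp_rw [hy, ← mul_assoc, hfd]
      exact hxw
    have hnum : x ⬝ᵥ N.mulVec x = ∑ u, ∑ v, S u v * y u * y v := by
      rw [hquad]
      exact Finset.sum_congr rfl fun u _ => Finset.sum_congr rfl fun v _ => by
        rw [hNapp, hy]; ring
    have hden : ∑ u, d u * (y u)^2 = x ⬝ᵥ x := by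
      simp_rw [hy, hfd2]
      simp [dotProduct, pow_two]
    rw [le_div_iff₀ hxx, hnum]
    calc κ * (x ⬝ᵥ x) = κ * ∑ u, d u * (y u)^2 := by rw [hden]
      _ ≤ ∑ u, ∑ v, S u v * y u * y v := hQ y hy0
  -- boundedness of the Rayleigh quotient
  have hbdd : ∀ (U : Submodule ℝ (Fin n → ℝ)),
      BddAbove (Set.range fun x : {x : Fin n → ℝ // x ∈ U ∧ x ≠ 0} =>
        (x.1 ⬝ᵥ N.mulVec x.1) / (x.1 ⬝ᵥ x.1)) := by
    intro U
    refine ⟨∑ u, ∑ v, |N u v|, ?_⟩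
    rintro r ⟨⟨x, hxU, hx0⟩, rfl⟩
    have hxx : 0 < x ⬝ᵥ x := by
      obtain ⟨u, hu⟩ := Function.ne_iff.mp hx0
      exact Finset.sum_pos' (fun i _ => mul_self_nonneg _)
        ⟨u, Finset.mem_univ u, mul_self_pos.mpr hu⟩
    rw [div_le_iff₀ hxx, hquad]
    have hterm : ∀ u v, N u v * x u * x v ≤ |N u v| * (x ⬝ᵥ x) := by
      intro u v
      have h1 : x u * x u ≤ x ⬝ᵥ x :=
        Finset.single_le_sum (f := fun i => x i * x i)
          (fun i _ => mul_self_nonneg _) (Finset.mem_univ u)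
      have h2 : x v * x v ≤ x ⬝ᵥ x :=
        Finset.single_le_sum (f := fun i => x i * x i)
          (fun i _ => mul_self_nonneg _) (Finset.mem_univ v)
      have h3 : N u v * x u * x v ≤ |N u v| * |x u * x v| := by
        calc N u v * x u * x v ≤ |N u v * x u * x v| := le_abs_self _
          _ = |N u v| * |x u * x v| := by rw [mul_assoc, abs_mul]
      have h4 : |x u * x v| ≤ x ⬝ᵥ x := by
        rw [abs_mul]
        nlinarith [abs_nonneg (x u), abs_nonneg (x v), sq_abs (x u), sq_abs (x v),
          sq_nonneg (|x u| - |x v|)]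
      calc N u v * x u * x v ≤ |N u v| * |x u * x v| := h3
        _ ≤ |N u v| * (x ⬝ᵥ x) := mul_le_mul_of_nonneg_left h4 (abs_nonneg _)
    calc ∑ u, ∑ v, N u v * x u * x v ≤ ∑ u, ∑ v, |N u v| * (x ⬝ᵥ x) :=
          Finset.sum_le_sum fun u _ => Finset.sum_le_sum fun v _ => hterm u v
      _ = (∑ u, ∑ v, |N u v|) * (x ⬝ᵥ x) := by
          rw [Finset.sum_mul]
          exact Finset.sum_congr rfl fun u _ => (Finset.sum_mul _ _ _).symm
  -- nonemptiness of the index type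
  haveI : Nonempty {U : Submodule ℝ (Fin n → ℝ) // Module.finrank ℝ U = 2} := by
    refine ⟨⟨Submodule.span ℝ (Set.range ((Pi.basisFun ℝ (Fin n)) ∘ Fin.castLE hn)), ?_⟩⟩
    rw [finrank_span_eq_card ((Pi.basisFun ℝ (Fin n)).linearIndependent.comp _
      (Fin.castLE_injective hn))]
    simp
  -- main argument
  rw [ge_iff_le]
  unfold lambda2
  apply le_ciInf
  rintro ⟨U, hU⟩
  let φ : (Fin n → ℝ) →ₗ[ℝ] ℝ :=
    { toFun := fun x => ∑ u, Real.sqrt (d u) * x u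
      map_add' := fun a b' => by simp [mul_add, Finset.sum_add_distrib]
      map_smul' := fun r a => by simp [Finset.mul_sum]; exact Finset.sum_congr rfl fun u _ => by ring }
  let ψ := φ.comp U.subtype
  have hker : LinearMap.ker ψ ≠ ⊥ := by
    intro h
    have hinj := LinearMap.ker_eq_bot.mp h
    have h1 := LinearMap.finrank_le_finrank_of_injective hinj
    rw [hU, Module.finrank_self] at h1
    omega
  obtain ⟨v, hvker, hvne⟩ := Submodule.exists_mem_ne_zero_of_ne_bot hker
  have hx0 : (v : Fin n → ℝ) ≠ 0 := by
    intro h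
    exact hvne (by exact_mod_cast Subtype.ext h)
  have hxw : ∑ u, Real.sqrt (d u) * (v : Fin n → ℝ) u = 0 := by
    have := LinearMap.mem_ker.mp hvker
    simpa [ψ, φ] using this
  refine le_trans (hRay (v : Fin n → ℝ) hxw hx0) ?_
  exact le_ciSup (hbdd U) ⟨(v : Fin n → ℝ), v.2, hx0⟩
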